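/- arXiv:2603.07132 — 4 statements merged into one kernel-verified Lean document; each statement's English description precedes it below -/
import Mathlib

section
/- Let β > 0, let τ be a probability measure on ℝ, and let a ∈ ℝ. Then the non-tangential limit of (z − a)^β ∫ (z − x)^{−β} dτ(x) as z → a within any cone {u + iv : v > 0, |u − a| < θ v} (θ > 0) equals τ({a}). -/
open Complex MeasureTheory Filter Topology

theorem stmt7 (β : ℝ) (hβ : 0 < β) (τ : Measure ℝ) [IsProbabilityMeasure τ]
    (a : ℝ) (θ : ℝ) (hθ : 0 < θ) :
    Tendsto
      (fun z : ℂ => (z - (a : ℂ)) ^ ((β : ℝ) : ℂ) * ∫ x, (z - (x : ℂ)) ^ ((-β : ℝ) : ℂ) ∂τ)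
      (nhdsWithin (a : ℂ) {z : ℂ | 0 < z.im ∧ |z.re - a| < θ * z.im})
      (𝓝 (((τ {a}).toReal : ℂ))) := by
  set S : Set ℂ := {z : ℂ | 0 < z.im ∧ |z.re - a| < θ * z.im} with hS
  set l : Filter ℂ := nhdsWithin (a : ℂ) S with hl
  have hcast : ((-β : ℝ) : ℂ) = -((β : ℝ) : ℂ) := by push_cast; ring
  -- The key dominated convergence statement
  have key : Tendsto
      (fun z : ℂ => ∫ x, (z - (a : ℂ)) ^ ((β : ℝ) : ℂ) * (z - (x : ℂ)) ^ ((-β : ℝ) : ℂ) ∂τ)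
      l (𝓝 (∫ x, Set.indicator ({a} : Set ℝ) (fun _ => (1 : ℂ)) x ∂τ)) := by
    apply tendsto_integral_filter_of_dominated_convergence
      (fun _ : ℝ => Real.sqrt (1 + θ ^ 2) ^ β)
    · filter_upwards with z
      exact (((measurable_const.sub Complex.measurable_ofReal).pow
        measurable_const).const_mul _).aestronglyMeasurable
    · filter_upwards [eventually_mem_nhdsWithin] with z hz
      refine ae_of_all _ fun x => ?_
      have hzim : 0 < z.im := hz.1
      have habs : ∀ (w : ℂ) (c : ℝ), ‖w ^ (c : ℂ)‖ = ‖w‖ ^ c :=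
        fun w c => Complex.norm_cpow_real w c
      have hd2pos : 0 < ‖z - (x : ℂ)‖ := by
        rw [norm_pos_iff]
        intro h
        have : (z - (x : ℂ)).im = 0 := by rw [h]; simp
        simp [Complex.sub_im] at this
        linarith
      have hd1le : ‖z - (a : ℂ)‖ ≤ Real.sqrt (1 + θ ^ 2) * ‖z - (x : ℂ)‖ := by
        have h1 : ‖z - (a : ℂ)‖ = Real.sqrt ((z.re - a) ^ 2 + z.im ^ 2) := by
          rw [Complex.norm_def, Complex.normSq_apply]
          simp [Complex.sub_re, Complex.sub_im]
          ring_nf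
        have h2 : ‖z - (x : ℂ)‖ = Real.sqrt ((z.re - x) ^ 2 + z.im ^ 2) := by
          rw [Complex.norm_def, Complex.normSq_apply]
          simp [Complex.sub_re, Complex.sub_im]
          ring_nf
        rw [h1, h2, ← Real.sqrt_mul (by positivity)]
        apply Real.sqrt_le_sqrt
        have hre : (z.re - a) ^ 2 ≤ θ ^ 2 * z.im ^ 2 := by
          have := hz.2
          have h3 : |z.re - a| ≤ θ * z.im := le_of_lt this
          calc (z.re - a) ^ 2 = |z.re - a| ^ 2 := (_root_.sq_abs _).symm
            _ ≤ (θ * z.im) ^ 2 := by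
                apply sq_le_sq' <;> [linarith [abs_nonneg (z.re - a)]; exact h3]
            _ = θ ^ 2 * z.im ^ 2 := by ring
        nlinarith [sq_nonneg (z.re - x)]
      -- norm computation
      rw [norm_mul, habs, habs,
        Real.rpow_neg hd2pos.le]
      have hkey : ‖z - (a : ℂ)‖ ^ β ≤
          Real.sqrt (1 + θ ^ 2) ^ β * ‖z - (x : ℂ)‖ ^ β := by
        have := Real.rpow_le_rpow (norm_nonneg _) hd1le hβ.le
        rwa [Real.mul_rpow (Real.sqrt_nonneg _) (norm_nonneg _)] at this
      have hp : 0 < ‖z - (x : ℂ)‖ ^ β := Real.rpow_pos_of_pos hd2pos β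
      calc ‖z - (a : ℂ)‖ ^ β * (‖z - (x : ℂ)‖ ^ β)⁻¹
          ≤ Real.sqrt (1 + θ ^ 2) ^ β * ‖z - (x : ℂ)‖ ^ β
            * (‖z - (x : ℂ)‖ ^ β)⁻¹ := by
            exact mul_le_mul_of_nonneg_right hkey (by positivity)
        _ = Real.sqrt (1 + θ ^ 2) ^ β := by field_simp
    · exact integrable_const _
    · refine ae_of_all _ fun x => ?_
      by_cases hx : x = a
      · subst hx
        have hev : ∀ᶠ z : ℂ in l, (z - (x : ℂ)) ^ ((β : ℝ) : ℂ) * (z - (x : ℂ)) ^ ((-β : ℝ) : ℂ) = 1 := by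
          filter_upwards [eventually_mem_nhdsWithin] with z hz
          have hz0 : z - (x : ℂ) ≠ 0 := by
            intro h
            have : (z - (x : ℂ)).im = 0 := by rw [h]; simp
            simp [Complex.sub_im] at this
            have := hz.1
            linarith
          rw [hcast, ← Complex.cpow_add _ _ hz0, add_neg_cancel, Complex.cpow_zero]
        rw [Set.indicator_of_mem (Set.mem_singleton x)]
        exact tendsto_const_nhds.congr' (by filter_upwards [hev] with z h using h.symm)
      · rw [Set.indicator_of_notMem (by simpa using hx)]
        rw [tendsto_zero_iff_norm_tendsto_zero]
        have hax : ‖(a : ℂ) - (x : ℂ)‖ ≠ 0 := by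
          simp only [ne_eq, norm_eq_zero, sub_eq_zero]
          intro h
          exact hx (by exact_mod_cast h.symm)
        have hz_tendsto : Tendsto (fun z : ℂ => z) l (𝓝 (a : ℂ)) :=
          tendsto_id.mono_left nhdsWithin_le_nhds
        have h1 : Tendsto (fun z : ℂ => ‖z - (a : ℂ)‖ ^ β) l (𝓝 0) := by
          have hb : Tendsto (fun z : ℂ => ‖z - (a : ℂ)‖) l (𝓝 0) := by
            have : Continuous fun z : ℂ => ‖z - (a : ℂ)‖ :=
              continuous_norm.comp (continuous_id.sub continuous_const)
            have := (this.tendsto (a : ℂ)).comp hz_tendsto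
            simpa [Function.comp_def] using this
          have hc : ContinuousAt (fun t : ℝ => t ^ β) 0 :=
            Real.continuousAt_rpow_const 0 β (Or.inr hβ.le)
          have := hc.tendsto.comp hb
          simpa [Real.zero_rpow hβ.ne', Function.comp_def] using this
        have h2 : Tendsto (fun z : ℂ => ‖z - (x : ℂ)‖ ^ (-β)) l
            (𝓝 (‖(a : ℂ) - (x : ℂ)‖ ^ (-β))) := by
          have hb : Tendsto (fun z : ℂ => ‖z - (x : ℂ)‖) l
              (𝓝 (‖(a : ℂ) - (x : ℂ)‖)) := by
            have : Continuous fun z : ℂ => ‖z - (x : ℂ)‖ :=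
              continuous_norm.comp (continuous_id.sub continuous_const)
            exact (this.tendsto (a : ℂ)).comp hz_tendsto
          have hc : ContinuousAt (fun t : ℝ => t ^ (-β)) (‖(a : ℂ) - (x : ℂ)‖) :=
            Real.continuousAt_rpow_const _ _ (Or.inl hax)
          exact hc.tendsto.comp hb
        have := h1.mul h2
        rw [zero_mul] at this
        refine this.congr fun z => ?_
        rw [norm_mul, Complex.norm_cpow_real, Complex.norm_cpow_real]
  -- rewrite the integral of the indicator
  have hind : (∫ x, Set.indicator ({a} : Set ℝ) (fun _ => (1 : ℂ)) x ∂τ)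
      = (((τ {a}).toReal : ℂ)) := by
    rw [integral_indicator_const (1 : ℂ) (measurableSet_singleton a)]
    simp [Complex.real_smul, measureReal_def]
  rw [hind] at key
  refine key.congr fun z => ?_
  exact integral_const_mul _ _
end

section
/- If ν(dy) = s y^{−s−1} 1_{y>1} dy is the Pareto(s) measure with s > β > −1 and x > 1, then ∫ (x − y)_−^β dν(y) = s x^{β − s} B(β + 1, s − β), where B is the Beta function. -/
open Real MeasureTheory

lemma real_beta (a b : ℝ) (ha : 0 < a) (hb : 0 < b) :
    ∫ u in Set.Ioo (0:ℝ) 1, u ^ (a-1) * (1-u) ^ (b-1)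
      = Real.Gamma a * Real.Gamma b / Real.Gamma (a+b) := by
  have hG : (0:ℝ) < Real.Gamma (a+b) := Real.Gamma_pos_of_pos (by linarith)
  have hC := Complex.Gamma_mul_Gamma_eq_betaIntegral
    (s := a) (t := b) (by simpa using ha) (by simpa using hb)
  have key : Complex.betaIntegral a b
      = ((∫ u in Set.Ioo (0:ℝ) 1, u ^ (a-1) * (1-u) ^ (b-1) : ℝ) : ℂ) := by
    rw [Complex.betaIntegral]
    rw [show (∫ u in Set.Ioo (0:ℝ) 1, u ^ (a-1) * (1-u) ^ (b-1) : ℝ)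
        = ∫ u in (0:ℝ)..1, u ^ (a-1) * (1-u) ^ (b-1) by
      rw [intervalIntegral.integral_of_le zero_le_one,
        MeasureTheory.integral_Ioc_eq_integral_Ioo]]
    rw [← intervalIntegral.integral_ofReal]
    refine intervalIntegral.integral_congr fun t ht => ?_
    rw [Set.uIcc_of_le zero_le_one] at ht
    rw [show ((a:ℂ)-1) = ((a-1:ℝ):ℂ) by push_cast; ring,
      show ((b:ℂ)-1) = ((b-1:ℝ):ℂ) by push_cast; ring,
      show ((1:ℂ)-(t:ℂ)) = ((1-t:ℝ):ℂ) by push_cast; ring,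
      ← Complex.ofReal_cpow ht.1, ← Complex.ofReal_cpow (by linarith [ht.2]),
      Complex.ofReal_mul]
  rw [key] at hC
  have : (Real.Gamma a * Real.Gamma b : ℂ)
      = ((Real.Gamma (a+b) * ∫ u in Set.Ioo (0:ℝ) 1, u ^ (a-1) * (1-u) ^ (b-1) : ℝ) : ℂ) := by
    push_cast
    rw [← Complex.Gamma_ofReal, ← Complex.Gamma_ofReal, ← Complex.Gamma_ofReal]
    push_cast
    rw [hC]
  have h2 : Real.Gamma a * Real.Gamma b
      = Real.Gamma (a+b) * ∫ u in Set.Ioo (0:ℝ) 1, u ^ (a-1) * (1-u) ^ (b-1) := by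
    exact_mod_cast this
  field_simp
  linarith [h2]

theorem stmt15 (s β : ℝ) (hβ : -1 < β) (hs : β < s) (x : ℝ) (hx : 1 < x) :
    ∫ y in Set.Ioi x, (y - x) ^ β * (s * y ^ (-s - 1))
      = s * x ^ (β - s) * (Real.Gamma (β + 1) * Real.Gamma (s - β) / Real.Gamma (s + 1)) := by
  have hx0 : (0:ℝ) < x := by linarith
  have himg : (fun u : ℝ => x / u) '' Set.Ioo 0 1 = Set.Ioi x := by
    ext y
    constructor
    · rintro ⟨u, ⟨hu0, hu1⟩, rfl⟩
      exact (lt_div_iff₀ hu0).mpr (by nlinarith)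
    · intro hy
      have hy' : x < y := hy
      refine ⟨x / y, ⟨div_pos hx0 (by linarith), (div_lt_one (by linarith)).mpr hy'⟩, ?_⟩
      field_simp
  have hderiv : ∀ u ∈ Set.Ioo (0:ℝ) 1,
      HasDerivWithinAt (fun u => x / u) (-x / u ^ 2) (Set.Ioo 0 1) u := by
    intro u hu
    have : HasDerivAt (fun u : ℝ => x * u⁻¹) (x * (-(u ^ 2)⁻¹)) u :=
      (hasDerivAt_inv (ne_of_gt hu.1)).const_mul x
    simpa [div_eq_mul_inv, neg_div, mul_neg] using this.hasDerivWithinAt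
  have hinj : Set.InjOn (fun u : ℝ => x / u) (Set.Ioo 0 1) := by
    intro u hu v hv h
    field_simp [ne_of_gt hu.1, ne_of_gt hv.1] at h
    exact h.symm
  have key := MeasureTheory.integral_image_eq_integral_abs_deriv_smul measurableSet_Ioo
    hderiv hinj (fun y => (y - x) ^ β * (s * y ^ (-s - 1)))
  rw [himg] at key
  rw [key]
  have hpt : Set.EqOn
      (fun u => |(-x / u ^ 2)| • ((x / u - x) ^ β * (s * (x / u) ^ (-s - 1))))
      (fun u => (s * x ^ (β - s)) * (u ^ ((s - β) - 1) * (1 - u) ^ ((β + 1) - 1)))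
      (Set.Ioo 0 1) := by
    intro u hu
    obtain ⟨hu0, hu1⟩ := hu
    have h1u : (0:ℝ) < 1 - u := by linarith
    simp only [smul_eq_mul]
    rw [abs_div, abs_neg, abs_of_pos hx0, abs_of_pos (by positivity : (0:ℝ) < u ^ 2)]
    rw [show x / u - x = x * ((1 - u) / u) by field_simp]
    rw [Real.mul_rpow hx0.le (by positivity), Real.div_rpow h1u.le hu0.le,
      Real.div_rpow hx0.le hu0.le]
    rw [show β - s = 1 + (β + (-s - 1)) by ring, Real.rpow_add hx0, Real.rpow_add hx0,
      Real.rpow_one]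
    have eu : u ^ (s - β - 1) * (u ^ (2:ℕ) * (u ^ β * u ^ (-s - 1))) = 1 := by
      rw [← Real.rpow_natCast u 2, ← Real.rpow_add hu0, ← Real.rpow_add hu0, ← Real.rpow_add hu0,
        show s - β - 1 + (((2:ℕ):ℝ) + (β + (-s - 1))) = 0 by push_cast; ring, Real.rpow_zero]
    have hub : u ^ β ≠ 0 := by positivity
    have hus : u ^ (-s - 1) ≠ 0 := by positivity
    have hu2 : (u:ℝ) ^ (2:ℕ) ≠ 0 := by positivity
    field_simp
    rw [show β + 1 - 1 = β by ring]
    linear_combination (- s * (1 - u) ^ β) * eu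
  rw [MeasureTheory.setIntegral_congr_fun measurableSet_Ioo hpt,
    MeasureTheory.integral_const_mul,
    real_beta (s - β) (β + 1) (by linarith) (by linarith),
    show s - β + (β + 1) = s + 1 by ring]
  ring
end

section
/- Let M be a real positive semidefinite n×n matrix, z = u + iv with v > 0 and u ≥ 0, e a unit vector, and B = (M − z I)^{−1}. Then |Im(1 + eᵀ B e)| ≥ v / (|z|² + eᵀ M² e), and hence |1 + eᵀ B e|^{α/2 − 1} ≤ v^{α/2 − 1} (|z|² + eᵀ M² e)^{1 − α/2} for α ∈ (0,2). -/
open Matrix Complex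

theorem stmt17 (n : ℕ) (M : Matrix (Fin n) (Fin n) ℝ) (hM : M.PosSemidef)
    (z : ℂ) (hv : 0 < z.im) (hu : 0 ≤ z.re)
    (e : Fin n → ℝ) (he : ∑ i, e i ^ 2 = 1) (α : ℝ) (hα : α ∈ Set.Ioo (0:ℝ) 2) :
    let B : Matrix (Fin n) (Fin n) ℂ := (M.map Complex.ofReal - z • 1)⁻¹
    let q : ℂ := (fun i => (e i : ℂ)) ⬝ᵥ B.mulVec (fun i => (e i : ℂ))
    z.im / (‖z‖ ^ 2 + e ⬝ᵥ (M * M).mulVec e) ≤ |(1 + q).im| ∧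
    ‖1 + q‖ ^ (α / 2 - 1)
      ≤ z.im ^ (α / 2 - 1) * (‖z‖ ^ 2 + e ⬝ᵥ (M * M).mulVec e) ^ (1 - α / 2) := by
  intro B q
  obtain ⟨hα0, hα2⟩ := hα
  set A : Matrix (Fin n) (Fin n) ℂ := M.map Complex.ofReal - z • 1 with hA
  have hMsym : ∀ i j, M i j = M j i := fun i j => by simpa using hM.1.apply j i
  have hAapp : ∀ (y : Fin n → ℂ) i, A.mulVec y i
      = (∑ j, (M i j : ℂ) * y j) - z * y i := by
    intro y i
    simp only [hA, Matrix.sub_mulVec, Matrix.mulVec, dotProduct, Matrix.sub_apply,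
      Matrix.smul_apply, Matrix.one_apply, Matrix.map_apply, Pi.sub_apply, smul_eq_mul,
      mul_ite, mul_one, mul_zero, Finset.sum_sub_distrib, Finset.sum_ite_eq, Finset.mem_univ,
      if_true]
    simp_rw [sub_mul, Finset.sum_sub_distrib, ite_mul, zero_mul]
    simp
  -- imaginary part of the quadratic form
  have hquad : ∀ y : Fin n → ℂ,
      (∑ i, (starRingEnd ℂ) (y i) * A.mulVec y i).im
        = - z.im * ∑ i, Complex.normSq (y i) := by
    intro y
    have hS : (∑ i, ∑ j, (M i j : ℂ) * ((starRingEnd ℂ) (y i) * y j)).im = 0 := by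
      set S := ∑ i, ∑ j, (M i j : ℂ) * ((starRingEnd ℂ) (y i) * y j) with hSdef
      have hconj : (starRingEnd ℂ) S = S := by
        rw [hSdef, map_sum]
        rw [Finset.sum_comm]
        refine Finset.sum_congr rfl fun i _ => ?_
        rw [map_sum]
        refine Finset.sum_congr rfl fun j _ => ?_
        simp only [_root_.map_mul, Complex.conj_ofReal, RingHom.toFun_eq_coe, Complex.conj_conj]
        rw [hMsym j i]
        ring
      have := Complex.conj_eq_iff_im.mp hconj
      exact this
    have : (∑ i, (starRingEnd ℂ) (y i) * A.mulVec y i)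
        = (∑ i, ∑ j, (M i j : ℂ) * ((starRingEnd ℂ) (y i) * y j))
          - z * ∑ i, (Complex.normSq (y i) : ℂ) := by
      simp_rw [hAapp, mul_sub, Finset.sum_sub_distrib, Finset.mul_sum]
      congr 1
      · refine Finset.sum_congr rfl fun i _ => Finset.sum_congr rfl fun j _ => by ring
      · refine Finset.sum_congr rfl fun i _ => ?_
        rw [show (starRingEnd ℂ) (y i) * (z * y i)
            = z * (y i * (starRingEnd ℂ) (y i)) by ring, Complex.mul_conj]
    rw [this, Complex.sub_im, hS, ← Complex.ofReal_sum, Complex.mul_im,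
      Complex.ofReal_im, Complex.ofReal_re]
    ring
  -- invertibility of A
  have hdet : IsUnit A.det := by
    rw [isUnit_iff_ne_zero]
    intro hd
    obtain ⟨y, hy0, hy⟩ := (Matrix.exists_mulVec_eq_zero_iff).mpr hd
    have h1 : (∑ i, (starRingEnd ℂ) (y i) * A.mulVec y i).im = 0 := by
      simp [hy]
    rw [hquad y] at h1
    have hN0 : ∑ i, Complex.normSq (y i) = 0 := by
      rcases mul_eq_zero.mp h1 with h | h
      · exact absurd (neg_eq_zero.mp h) (ne_of_gt hv)
      · exact h
    apply hy0
    funext i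
    have := (Finset.sum_eq_zero_iff_of_nonneg
      (fun j _ => Complex.normSq_nonneg (y j))).mp hN0 i (Finset.mem_univ i)
    simpa using Complex.normSq_eq_zero.mp this
  set e' : Fin n → ℂ := fun i => (e i : ℂ) with he'
  set x : Fin n → ℂ := B.mulVec e' with hx
  have hBA : B = A⁻¹ := rfl
  have hAx : A.mulVec x = e' := by
    rw [hx, hBA, Matrix.mulVec_mulVec, Matrix.mul_nonsing_inv A hdet, Matrix.one_mulVec]
  have hqx : q = ∑ i, e' i * x i := rfl
  set N := ∑ i, Complex.normSq (x i) with hNdef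
  have hq_im : q.im = z.im * N := by
    have hsum : ∑ i, (starRingEnd ℂ) (x i) * A.mulVec x i = (starRingEnd ℂ) q := by
      simp only [hAx]
      rw [hqx, map_sum]
      refine Finset.sum_congr rfl fun i _ => ?_
      simp only [_root_.map_mul, he', Complex.conj_ofReal]
      ring
    have h2 := hquad x
    rw [hsum, Complex.conj_im] at h2
    rw [← hNdef] at h2
    linarith
  -- A is symmetric
  have hAsym : ∀ i j, A i j = A j i := by
    intro i j
    simp only [hA, Matrix.sub_apply, Matrix.smul_apply, Matrix.map_apply, Matrix.one_apply,
      hMsym i j, eq_comm]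
  -- the key identity 1 = ∑ (A e')_j x_j
  have hone : (1 : ℂ) = ∑ j, (A.mulVec e') j * x j := by
    have h1 : (1 : ℂ) = ∑ i, e' i * e' i := by
      rw [← Complex.ofReal_one, ← he, Complex.ofReal_sum]
      exact Finset.sum_congr rfl fun i _ => by push_cast; ring
    calc (1 : ℂ) = ∑ i, e' i * (A.mulVec x) i := by rw [hAx]; exact h1
      _ = ∑ i, ∑ j, A i j * (e' i * x j) := by
          refine Finset.sum_congr rfl fun i _ => ?_
          rw [Matrix.mulVec, dotProduct, Finset.mul_sum]
          exact Finset.sum_congr rfl fun j _ => by ring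
      _ = ∑ j, (A.mulVec e') j * x j := by
          rw [Finset.sum_comm]
          refine Finset.sum_congr rfl fun j _ => ?_
          rw [Matrix.mulVec, dotProduct, Finset.sum_mul]
          exact Finset.sum_congr rfl fun i _ => by rw [hAsym i j]; ring
  set W := ∑ j, Complex.normSq (A.mulVec e' j) with hWdef
  -- Cauchy-Schwarz : 1 ≤ W * N
  have hCS : 1 ≤ W * N := by
    have h1 : (1 : ℝ) = ‖(∑ j, (A.mulVec e') j * x j)‖ := by
      rw [← hone, norm_one]
    have h2 : ‖(∑ j, (A.mulVec e') j * x j)‖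
        ≤ ∑ j, ‖(A.mulVec e' j)‖ * ‖(x j)‖ := by
      refine (norm_sum_le _ _).trans_eq ?_
      exact Finset.sum_congr rfl fun j _ => norm_mul _ _
    have h3 : (∑ j, ‖(A.mulVec e' j)‖ * ‖(x j)‖) ^ 2
        ≤ (∑ j, ‖(A.mulVec e' j)‖ ^ 2) * ∑ j, ‖(x j)‖ ^ 2 :=
      Finset.sum_mul_sq_le_sq_mul_sq _ _ _
    have h4 : (1 : ℝ) ≤ (∑ j, ‖(A.mulVec e' j)‖ ^ 2) * ∑ j, ‖(x j)‖ ^ 2 := by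
      calc (1:ℝ) = 1 ^ 2 := by ring
        _ ≤ (∑ j, ‖(A.mulVec e' j)‖ * ‖(x j)‖) ^ 2 := by
            apply pow_le_pow_left₀ zero_le_one (h1.le.trans h2)
        _ ≤ _ := h3
    simpa only [hWdef, hNdef, Complex.sq_norm] using h4
  -- compute and bound W
  set a : Fin n → ℝ := M.mulVec e with ha
  have hWval : W = (∑ j, a j ^ 2) - 2 * z.re * (∑ j, a j * e j)
      + (z.re ^ 2 + z.im ^ 2) * ∑ j, e j ^ 2 := by
    rw [hWdef]
    have hentry : ∀ j, A.mulVec e' j = Complex.ofReal (a j) - z * Complex.ofReal (e j) := by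
      intro j
      rw [hAapp]
      simp only [ha, Matrix.mulVec, dotProduct, Complex.ofReal_sum, he']
      push_cast
      ring
    have hterm : ∀ j, Complex.normSq (Complex.ofReal (a j) - z * Complex.ofReal (e j))
        = a j ^ 2 - 2 * z.re * (a j * e j) + (z.re ^ 2 + z.im ^ 2) * e j ^ 2 := by
      intro j
      simp only [Complex.normSq_apply, Complex.sub_re, Complex.sub_im, Complex.mul_re,
        Complex.mul_im, Complex.ofReal_re, Complex.ofReal_im]
      ring
    simp only [hentry, hterm]
    rw [Finset.sum_add_distrib, Finset.sum_sub_distrib, ← Finset.mul_sum, ← Finset.mul_sum]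
  -- positivity facts
  have hMe : 0 ≤ ∑ j, a j * e j := by
    have h := hM.dotProduct_mulVec_nonneg e
    simp only [star_trivial] at h
    calc (0:ℝ) ≤ e ⬝ᵥ M.mulVec e := h
      _ = ∑ j, a j * e j := by
        rw [dotProduct]
        exact Finset.sum_congr rfl fun j _ => by rw [ha]; ring
  set D := ‖z‖ ^ 2 + e ⬝ᵥ (M * M).mulVec e with hDdef
  have hMM : e ⬝ᵥ (M * M).mulVec e = ∑ j, a j ^ 2 := by
    rw [← Matrix.mulVec_mulVec, ← ha, dotProduct]
    have : ∀ i, (M.mulVec a) i = ∑ j, M i j * a j := fun i => rfl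
    simp only [this, Finset.mul_sum]
    rw [Finset.sum_comm]
    refine Finset.sum_congr rfl fun j _ => ?_
    simp_rw [← mul_assoc]
    rw [← Finset.sum_mul]
    have : ∑ i, e i * M i j = a j := by
      rw [ha, Matrix.mulVec, dotProduct]
      exact Finset.sum_congr rfl fun i _ => by rw [hMsym j i]; ring
    rw [this, sq]
  have hnormz : ‖z‖ ^ 2 = z.re ^ 2 + z.im ^ 2 := by
    rw [Complex.sq_norm, Complex.normSq_apply]; ring
  have hWD : W ≤ D := by
    rw [hWval, hDdef, hMM, hnormz, he]
    have : 0 ≤ 2 * z.re * ∑ j, a j * e j := by positivity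
    linarith
  have hDpos : 0 < D := by
    have h1 : 0 < ‖z‖ ^ 2 := by
      have hz : z ≠ 0 := fun h => by simp [h] at hv
      exact pow_pos (norm_pos_iff.mpr hz) 2
    have h2 : 0 ≤ ∑ j, a j ^ 2 := Finset.sum_nonneg fun j _ => sq_nonneg _
    rw [hDdef, hMM]; linarith
  have hNnn : 0 ≤ N := Finset.sum_nonneg fun i _ => Complex.normSq_nonneg _
  have hDN : 1 ≤ D * N := le_trans hCS (mul_le_mul_of_nonneg_right hWD hNnn)
  have hmain : z.im / D ≤ z.im * N := by
    rw [div_le_iff₀ hDpos]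
    calc z.im = z.im * 1 := by ring
      _ ≤ z.im * (D * N) := by
          exact mul_le_mul_of_nonneg_left hDN (le_of_lt hv)
      _ = z.im * N * D := by ring
  have him1q : (1 + q).im = z.im * N := by
    rw [Complex.add_im, Complex.one_im, hq_im, zero_add]
  have himabs : |(1 + q).im| = z.im * N := by
    rw [him1q, _root_.abs_of_nonneg (mul_nonneg hv.le hNnn)]
  constructor
  · rw [himabs]; exact hmain
  · have hlow : z.im / D ≤ ‖1 + q‖ := by
      calc z.im / D ≤ z.im * N := hmain
        _ = |(1 + q).im| := himabs.symm
        _ ≤ ‖1 + q‖ := Complex.abs_im_le_norm _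
        _ = ‖1 + q‖ := rfl
    have hpos : 0 < z.im / D := div_pos hv hDpos
    have hc : α / 2 - 1 ≤ 0 := by linarith
    calc ‖1 + q‖ ^ (α / 2 - 1) ≤ (z.im / D) ^ (α / 2 - 1) :=
          Real.rpow_le_rpow_of_nonpos hpos hlow hc
      _ = z.im ^ (α / 2 - 1) * D ^ (1 - α / 2) := by
          rw [Real.div_rpow hv.le hDpos.le, div_eq_mul_inv, ← Real.rpow_neg hDpos.le]
          norm_num
end

section
/- Let (Y₁,…,Yₙ) be a random vector with ΣᵢYᵢ² = 1 a.s. and exchangeable components, and suppose n·E[Y₁⁴] → 1 as n → ∞. Let k* = argmax_k |Y_k|. Then ‖(Y₁,…,Yₙ) − sign(Y_{k*}) e_{k*}‖₂ → 0 in probability; equivalently |Y_{k*}| → 1 in probability. -/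
open MeasureTheory ProbabilityTheory Filter Topology

theorem stmt19 (Ω : ℕ → Type*) (mΩ : ∀ n, MeasureSpace (Ω n))
    (hprob : ∀ n, IsProbabilityMeasure (ℙ : Measure (Ω n)))
    (Y : (n : ℕ) → Fin n → Ω n → ℝ)
    (hmeas : ∀ n (i : Fin n), Measurable (Y n i))
    (hnorm : ∀ n, ∀ᵐ ω ∂(ℙ : Measure (Ω n)), ∑ i : Fin n, (Y n i ω) ^ 2 = 1)
    (hexch : ∀ n (σ : Equiv.Perm (Fin n)),
      Measure.map (fun ω (i : Fin n) => Y n (σ i) ω) (ℙ : Measure (Ω n))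
        = Measure.map (fun ω (i : Fin n) => Y n i ω) (ℙ : Measure (Ω n)))
    (h4 : Tendsto
      (fun n : ℕ => if h : 0 < n then
          (n : ℝ) * ∫ ω, (Y n ⟨0, h⟩ ω) ^ 4 ∂(ℙ : Measure (Ω n))
        else 0)
      atTop (𝓝 1)) :
    ∀ ε > (0:ℝ),
      Tendsto
        (fun n : ℕ => (ℙ : Measure (Ω n))
          {ω : Ω n | ε ≤ |(⨆ k : Fin n, |Y n k ω|) - 1|})
        atTop (𝓝 0) := by
  intro ε hε
  set a : ℕ → ℝ := fun n : ℕ => if h : 0 < n then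
      (n : ℝ) * ∫ ω, (Y n ⟨0, h⟩ ω) ^ 4 ∂(ℙ : Measure (Ω n)) else 0 with ha
  -- key bound for n ≥ 1
  have key : ∀ n : ℕ, 0 < n →
      (ℙ : Measure (Ω n)) {ω : Ω n | ε ≤ |(⨆ k : Fin n, |Y n k ω|) - 1|}
        ≤ ENNReal.ofReal ((1 - a n) / ε) := by
    intro n hn
    haveI := hprob n
    haveI : Nonempty (Fin n) := ⟨⟨0, hn⟩⟩
    set S : Ω n → ℝ := fun ω => ∑ i : Fin n, (Y n i ω) ^ 4 with hS
    -- pointwise facts on the event where the norm is 1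
    have hpt : ∀ ω : Ω n, (∑ i : Fin n, (Y n i ω) ^ 2 = 1) →
        (S ω ≤ 1 ∧ (ε ≤ |(⨆ k : Fin n, |Y n k ω|) - 1| → ε ≤ 1 - S ω)) := by
      intro ω hω
      set m : ℝ := ⨆ k : Fin n, |Y n k ω| with hm
      have hbdd : BddAbove (Set.range fun k : Fin n => |Y n k ω|) :=
        Set.Finite.bddAbove (Set.finite_range _)
      have hsq : ∀ i : Fin n, (Y n i ω) ^ 2 ≤ 1 := by
        intro i
        calc (Y n i ω) ^ 2 ≤ ∑ j : Fin n, (Y n j ω) ^ 2 :=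
              Finset.single_le_sum (f := fun j => (Y n j ω) ^ 2) (fun j _ => sq_nonneg _) (Finset.mem_univ i)
          _ = 1 := hω
      have habs : ∀ i : Fin n, |Y n i ω| ≤ 1 := by
        intro i
        have := hsq i
        nlinarith [abs_nonneg (Y n i ω), sq_abs (Y n i ω)]
      have hm1 : m ≤ 1 := ciSup_le habs
      have hm0 : 0 ≤ m := le_trans (abs_nonneg _) (le_ciSup hbdd ⟨0, hn⟩)
      have hle : ∀ i : Fin n, (Y n i ω) ^ 2 ≤ m ^ 2 := by
        intro i
        have h1 : |Y n i ω| ≤ m := le_ciSup hbdd i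
        nlinarith [abs_nonneg (Y n i ω), sq_abs (Y n i ω)]
      have hSm : S ω ≤ m ^ 2 := by
        have : ∀ i ∈ Finset.univ, (Y n i ω) ^ 4 ≤ m ^ 2 * (Y n i ω) ^ 2 := by
          intro i _
          nlinarith [hle i, sq_nonneg (Y n i ω)]
        calc S ω ≤ ∑ i : Fin n, m ^ 2 * (Y n i ω) ^ 2 := Finset.sum_le_sum this
          _ = m ^ 2 * ∑ i : Fin n, (Y n i ω) ^ 2 := by rw [Finset.mul_sum]
          _ = m ^ 2 := by rw [hω, mul_one]
      constructor
      · nlinarith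
      · intro hev
        have : |m - 1| = 1 - m := by
          rw [abs_of_nonpos (by linarith)]; ring
        rw [this] at hev
        nlinarith
    -- integrability of S
    have hYint : ∀ i : Fin n, Integrable (fun ω => (Y n i ω) ^ 4) (ℙ : Measure (Ω n)) := by
      intro i
      refine Integrable.mono' (integrable_const (1 : ℝ))
        (((hmeas n i).pow_const 4).aestronglyMeasurable) ?_
      filter_upwards [hnorm n] with ω hω
      have := (hpt ω hω)
      have hsq : (Y n i ω) ^ 2 ≤ 1 := by
        calc (Y n i ω) ^ 2 ≤ ∑ j : Fin n, (Y n j ω) ^ 2 :=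
              Finset.single_le_sum (f := fun j => (Y n j ω) ^ 2) (fun j _ => sq_nonneg _) (Finset.mem_univ i)
          _ = 1 := hω
      rw [Real.norm_eq_abs, abs_of_nonneg (by positivity)]
      nlinarith [sq_nonneg (Y n i ω)]
    have hSint : Integrable S (ℙ : Measure (Ω n)) := integrable_finset_sum _ fun i _ => hYint i
    -- exchangeability: all fourth moments are equal
    have hmom : ∀ i : Fin n, ∫ ω, (Y n i ω) ^ 4 ∂(ℙ : Measure (Ω n))
        = ∫ ω, (Y n ⟨0, hn⟩ ω) ^ 4 ∂(ℙ : Measure (Ω n)) := by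
      intro i
      set σ : Equiv.Perm (Fin n) := Equiv.swap ⟨0, hn⟩ i with hσ
      have hσ0 : σ ⟨0, hn⟩ = i := Equiv.swap_apply_left _ _
      set g : (Fin n → ℝ) → ℝ := fun v => (v ⟨0, hn⟩) ^ 4 with hg
      have hgmeas : Measurable g := (measurable_pi_apply _).pow_const 4
      have hF : Measurable (fun ω (j : Fin n) => Y n j ω) :=
        measurable_pi_lambda _ fun j => hmeas n j
      have hFσ : Measurable (fun ω (j : Fin n) => Y n (σ j) ω) :=
        measurable_pi_lambda _ fun j => hmeas n (σ j)
      calc ∫ ω, (Y n i ω) ^ 4 ∂(ℙ : Measure (Ω n))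
          = ∫ ω, g (fun j => Y n (σ j) ω) ∂(ℙ : Measure (Ω n)) := by
            simp only [hg, hσ0]
        _ = ∫ v, g v ∂(Measure.map (fun ω (j : Fin n) => Y n (σ j) ω) (ℙ : Measure (Ω n))) := by
            rw [integral_map hFσ.aemeasurable hgmeas.aestronglyMeasurable]
        _ = ∫ v, g v ∂(Measure.map (fun ω (j : Fin n) => Y n j ω) (ℙ : Measure (Ω n))) := by
            rw [hexch n σ]
        _ = ∫ ω, (Y n ⟨0, hn⟩ ω) ^ 4 ∂(ℙ : Measure (Ω n)) := by
            rw [integral_map hF.aemeasurable hgmeas.aestronglyMeasurable]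
    have hES : ∫ ω, S ω ∂(ℙ : Measure (Ω n)) = a n := by
      rw [ha]
      simp only [dif_pos hn]
      rw [hS]
      rw [integral_finset_sum _ fun i _ => hYint i]
      rw [Finset.sum_congr rfl fun i _ => hmom i]
      simp [Finset.card_univ, mul_comm]
    -- a.e. inclusion of events
    have hsub : (ℙ : Measure (Ω n)) {ω : Ω n | ε ≤ |(⨆ k : Fin n, |Y n k ω|) - 1|}
        ≤ (ℙ : Measure (Ω n)) {ω : Ω n | ε ≤ 1 - S ω} := by
      apply measure_mono_ae
      filter_upwards [hnorm n] with ω hω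
      exact fun hmem => (hpt ω hω).2 hmem
    -- Markov
    have hf_nonneg : 0 ≤ᵐ[(ℙ : Measure (Ω n))] fun ω => 1 - S ω := by
      filter_upwards [hnorm n] with ω hω
      have := (hpt ω hω).1
      simp only [Pi.zero_apply]
      linarith
    have hf_int : Integrable (fun ω => 1 - S ω) (ℙ : Measure (Ω n)) :=
      (integrable_const (1 : ℝ)).sub hSint
    have hmarkov := mul_meas_ge_le_integral_of_nonneg hf_nonneg hf_int ε
    have hEint : ∫ ω, (1 - S ω) ∂(ℙ : Measure (Ω n)) = 1 - a n := by
      rw [integral_sub (integrable_const 1) hSint, hES]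
      simp
    rw [hEint] at hmarkov
    have hfin : (ℙ : Measure (Ω n)) {ω : Ω n | ε ≤ 1 - S ω} ≠ ⊤ :=
      (measure_lt_top _ _).ne
    calc (ℙ : Measure (Ω n)) {ω : Ω n | ε ≤ |(⨆ k : Fin n, |Y n k ω|) - 1|}
        ≤ (ℙ : Measure (Ω n)) {ω : Ω n | ε ≤ 1 - S ω} := hsub
      _ = ENNReal.ofReal (((ℙ : Measure (Ω n)) {ω : Ω n | ε ≤ 1 - S ω}).toReal) :=
          (ENNReal.ofReal_toReal hfin).symm
      _ ≤ ENNReal.ofReal ((1 - a n) / ε) := by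
          apply ENNReal.ofReal_le_ofReal
          rw [le_div_iff₀ hε]
          change ε * ((ℙ : Measure (Ω n)) {x | ε ≤ 1 - S x}).toReal ≤ 1 - a n at hmarkov
          linarith
    -- done
  have hlim : Tendsto (fun n : ℕ => ENNReal.ofReal ((1 - a n) / ε)) atTop (𝓝 0) := by
    have h1 : Tendsto (fun n : ℕ => (1 - a n) / ε) atTop (𝓝 0) := by
      have := (tendsto_const_nhds (x := (1:ℝ)) (f := atTop (α := ℕ))).sub h4
      have h2 := this.div_const ε
      simpa using h2
    have := (ENNReal.continuous_ofReal.tendsto 0).comp h1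
    rw [ENNReal.ofReal_zero] at this
    exact this
  refine tendsto_of_tendsto_of_tendsto_of_le_of_le' tendsto_const_nhds hlim ?_ ?_
  · exact Eventually.of_forall fun n => zero_le
  · filter_upwards [eventually_gt_atTop 0] with n hn
    exact key n hn
end
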